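/- For every P > 0, setting x = 2P²/(1 + 4P + 2P²), one has (1/(2π))·∫₀^{2π} log₂((1+2P)² − 2P²·(1 + cos θ)) dθ = log₂(1 + 4P + 2P²) + log₂(1 + √(1 − x²)) − 1. -/

import Mathlib

open MeasureTheory Real Metric Complex


lemma key_cauchy (r : ℝ) (hr0 : 0 ≤ r) (hr1 : r < 1) :
    (∫ θ in (0:ℝ)..(2*π), Complex.log (1 - r * Complex.exp (θ * Complex.I))) = 0 := by
  set f : ℂ → ℂ := fun z => Complex.log (1 - (r:ℂ) * z) with hf
  have hre : ∀ z : ℂ, ‖z‖ ≤ 1 → 0 < (1 - (r:ℂ) * z).re := by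
    intro z hz
    have h1 : |((r:ℂ) * z).re| ≤ r := by
      calc |((r:ℂ) * z).re| ≤ ‖((r:ℂ) * z)‖ := Complex.abs_re_le_norm _
        _ = r * ‖z‖ := by simp [abs_of_nonneg hr0]
        _ ≤ r * 1 := by nlinarith [norm_nonneg z]
        _ = r := by ring
    have := abs_le.1 h1
    simp only [Complex.sub_re, Complex.one_re]
    linarith
  have hdiff : ∀ z ∈ closedBall (0:ℂ) 1, DifferentiableAt ℂ f z := by
    intro z hz
    simp only [mem_closedBall, dist_zero_right] at hz
    have : DifferentiableAt ℂ (fun z : ℂ => 1 - (r:ℂ) * z) z := by fun_prop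
    exact (Complex.differentiableAt_log (Or.inl (hre z hz))).comp z this
  have hdc : DiffContOnCl ℂ f (ball (0:ℂ) 1) := by
    refine ⟨fun z hz => (hdiff z (ball_subset_closedBall hz)).differentiableWithinAt, ?_⟩
    rw [closure_ball (0:ℂ) one_ne_zero]
    exact fun z hz => (hdiff z hz).continuousAt.continuousWithinAt
  have hci := hdc.circleIntegral_sub_inv_smul (w := 0) (by simp)
  have hf0 : f 0 = 0 := by simp [hf]
  rw [hf0, smul_zero] at hci
  rw [circleIntegral] at hci
  simp only [deriv_circleMap, circleMap_zero, sub_zero, smul_eq_mul] at hci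
  norm_num at hci
  have hval : ∀ θ : ℝ, Complex.exp (θ * Complex.I) * Complex.I *
      ((Complex.exp (θ * Complex.I))⁻¹ * f (Complex.exp (θ * Complex.I)))
      = Complex.I * Complex.log (1 - (r:ℂ) * Complex.exp (θ * Complex.I)) := by
    intro θ
    have := Complex.exp_ne_zero (θ * Complex.I)
    simp only [hf]
    field_simp
  rw [intervalIntegral.integral_congr (fun θ _ => hval θ)] at hci
  rw [intervalIntegral.integral_const_mul] at hci
  exact (mul_eq_zero.1 hci).resolve_left Complex.I_ne_zero


lemma key_real (r : ℝ) (hr0 : 0 ≤ r) (hr1 : r < 1) :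
    ∫ θ in (0:ℝ)..(2*π), Real.log (1 - 2*r*Real.cos θ + r^2) = 0 := by
  have hrepos : ∀ θ : ℝ, 0 < (1 - (r:ℂ) * Complex.exp (θ * Complex.I)).re := by
    intro θ
    simp only [Complex.sub_re, Complex.one_re, Complex.mul_re, Complex.ofReal_re,
      Complex.ofReal_im, Complex.exp_ofReal_mul_I_re, Complex.exp_ofReal_mul_I_im]
    nlinarith [Real.cos_le_one θ, Real.neg_one_le_cos θ]
  have hcont : Continuous fun θ : ℝ => Complex.log (1 - (r:ℂ) * Complex.exp (θ * Complex.I)) := by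
    rw [continuous_iff_continuousAt]
    intro θ
    have h1 : Continuous fun θ : ℝ => 1 - (r:ℂ) * Complex.exp (θ * Complex.I) := by
      fun_prop
    exact h1.continuousAt.clog (Or.inl (hrepos θ))
  have hint : IntervalIntegrable
      (fun θ : ℝ => Complex.log (1 - (r:ℂ) * Complex.exp (θ * Complex.I)))
      volume 0 (2*π) := hcont.intervalIntegrable _ _
  have hre := Complex.reCLM.intervalIntegral_comp_comm hint
  rw [key_cauchy r hr0 hr1] at hre
  simp only [Complex.reCLM_apply, Complex.zero_re] at hre
  have hpt : ∀ θ : ℝ, Real.log (1 - 2*r*Real.cos θ + r^2)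
      = 2 * (Complex.log (1 - (r:ℂ) * Complex.exp (θ * Complex.I))).re := by
    intro θ
    have habs : (‖(1 - (r:ℂ) * Complex.exp (θ * Complex.I))‖)^2
        = 1 - 2*r*Real.cos θ + r^2 := by
      rw [Complex.sq_norm, Complex.normSq_apply]
      simp only [Complex.sub_re, Complex.sub_im, Complex.one_re, Complex.one_im,
        Complex.mul_re, Complex.mul_im, Complex.ofReal_re, Complex.ofReal_im,
        Complex.exp_ofReal_mul_I_re, Complex.exp_ofReal_mul_I_im]
      nlinarith [Real.sin_sq_add_cos_sq θ]
    rw [Complex.log_re, ← habs, Real.log_pow]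
    push_cast; ring
  rw [intervalIntegral.integral_congr (fun θ _ => hpt θ),
    intervalIntegral.integral_const_mul, hre, mul_zero]

lemma key_main (x : ℝ) (hx0 : 0 < x) (hx1 : x < 1) :
    ∫ θ in (0:ℝ)..(2*π), Real.log (1 - x * Real.cos θ)
      = 2 * π * Real.log ((1 + Real.sqrt (1 - x^2)) / 2) := by
  set s := Real.sqrt (1 - x^2) with hs
  have hs0 : 0 < s := Real.sqrt_pos.2 (by nlinarith)
  have hs2 : s^2 = 1 - x^2 := Real.sq_sqrt (by nlinarith)
  have hs1 : s < 1 := by nlinarith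
  set r := (1 - s) / x with hr
  have hr0 : 0 ≤ r := div_nonneg (by linarith) hx0.le
  have hkey : x * (1 + r^2) = 2 * r := by
    rw [hr]
    field_simp
    nlinarith
  have hr1 : r < 1 := by
    rw [hr, div_lt_one hx0]
    nlinarith [mul_pos hx0 (show 0 < 1 + s - x by linarith)]
  have hrr : 1 + r^2 = 2 / (1 + s) := by
    rw [hr]
    field_simp
    nlinarith
  have hpt : ∀ θ : ℝ, Real.log (1 - x * Real.cos θ)
      = Real.log (1 - 2*r*Real.cos θ + r^2) - Real.log (1 + r^2) := by
    intro θ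
    have h1 : 0 < 1 - 2*r*Real.cos θ + r^2 := by
      nlinarith [Real.cos_le_one θ, Real.neg_one_le_cos θ]
    have h2 : (0:ℝ) < 1 + r^2 := by positivity
    rw [← Real.log_div h1.ne' h2.ne']
    congr 1
    have hcos := Real.cos_le_one θ
    field_simp
    nlinarith [Real.cos_le_one θ]
  rw [intervalIntegral.integral_congr (fun θ _ => hpt θ)]
  have hi1 : IntervalIntegrable (fun θ : ℝ => Real.log (1 - 2*r*Real.cos θ + r^2))
      volume 0 (2*π) := by
    apply Continuous.intervalIntegrable
    rw [continuous_iff_continuousAt]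
    intro θ
    have h1 : 0 < 1 - 2*r*Real.cos θ + r^2 := by
      nlinarith [Real.cos_le_one θ, Real.neg_one_le_cos θ]
    have h2 : ContinuousAt (fun θ : ℝ => 1 - 2*r*Real.cos θ + r^2) θ := by fun_prop
    exact h2.log h1.ne'
  have hi2 : IntervalIntegrable (fun _ : ℝ => Real.log (1 + r^2)) volume 0 (2*π) :=
    intervalIntegrable_const
  rw [intervalIntegral.integral_sub hi1 hi2, key_real r hr0 hr1,
    intervalIntegral.integral_const, zero_sub, sub_zero, smul_eq_mul, hrr]
  have h1s : (0:ℝ) < 1 + s := by linarith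
  rw [Real.log_div two_ne_zero h1s.ne', show (1+s)/2 = ((1+s)/2 : ℝ) from rfl,
    Real.log_div h1s.ne' two_ne_zero]
  ring

/-- Closed form of the ergodic MIMO cut-set bound for the `2`-user `2`-hop network
with `2` relays under i.i.d. uniform phase fading. -/
theorem mimo_closed_form_uniform_phase (P : ℝ) (hP : 0 < P) :
    (1 / (2 * π)) *
        (∫ θ in (0:ℝ)..(2 * π),
          Real.logb 2 ((1 + 2 * P) ^ 2 - 2 * P ^ 2 * (1 + Real.cos θ))) =
      Real.logb 2 (1 + 4 * P + 2 * P ^ 2) +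
        Real.logb 2 (1 + Real.sqrt (1 - (2 * P ^ 2 / (1 + 4 * P + 2 * P ^ 2)) ^ 2)) - 1 := by
  set S : ℝ := 1 + 4 * P + 2 * P ^ 2 with hSdef
  have hS : 0 < S := by positivity
  set x : ℝ := 2 * P ^ 2 / S with hxdef
  have hx0 : 0 < x := by positivity
  have hx1 : x < 1 := by
    rw [hxdef, div_lt_one hS]
    nlinarith
  have hpt : ∀ θ : ℝ, Real.logb 2 ((1 + 2 * P) ^ 2 - 2 * P ^ 2 * (1 + Real.cos θ))
      = Real.logb 2 S + Real.log (1 - x * Real.cos θ) / Real.log 2 := by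
    intro θ
    have ht : 0 < 1 - x * Real.cos θ := by
      nlinarith [Real.cos_le_one θ, Real.neg_one_le_cos θ]
    have heq : (1 + 2 * P) ^ 2 - 2 * P ^ 2 * (1 + Real.cos θ) = S * (1 - x * Real.cos θ) := by
      rw [hxdef]
      field_simp
      ring
    rw [heq, Real.logb_mul hS.ne' ht.ne']
    simp [Real.logb]
  rw [intervalIntegral.integral_congr (fun θ _ => hpt θ)]
  have hi1 : IntervalIntegrable (fun _ : ℝ => Real.logb 2 S) volume 0 (2*π) :=
    intervalIntegrable_const
  have hi2 : IntervalIntegrable (fun θ : ℝ => Real.log (1 - x * Real.cos θ) / Real.log 2)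
      volume 0 (2*π) := by
    apply Continuous.intervalIntegrable
    rw [continuous_iff_continuousAt]
    intro θ
    have ht : 0 < 1 - x * Real.cos θ := by
      nlinarith [Real.cos_le_one θ, Real.neg_one_le_cos θ]
    have h2 : ContinuousAt (fun θ : ℝ => 1 - x * Real.cos θ) θ := by fun_prop
    exact (h2.log ht.ne').div_const _
  rw [intervalIntegral.integral_add hi1 hi2, intervalIntegral.integral_const,
    intervalIntegral.integral_div, key_main x hx0 hx1]
  have hπ : (2 * π) ≠ 0 := by positivity
  have hs1 : (0:ℝ) < 1 + Real.sqrt (1 - x ^ 2) := by positivity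
  have hlogb : Real.log ((1 + Real.sqrt (1 - x ^ 2)) / 2) / Real.log 2
      = Real.logb 2 (1 + Real.sqrt (1 - x ^ 2)) - 1 := by
    rw [show Real.log ((1 + Real.sqrt (1 - x ^ 2)) / 2) / Real.log 2
        = Real.logb 2 ((1 + Real.sqrt (1 - x ^ 2)) / 2) from rfl,
      Real.logb_div hs1.ne' two_ne_zero, Real.logb_self_eq_one one_lt_two]
  have hl2 : Real.log 2 ≠ 0 := (Real.log_pos one_lt_two).ne'
  have h2 := (div_eq_iff hl2).1 hlogb
  field_simp
  rw [h2]
  ring
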